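/- (Spitzer's identity) Let R be a commutative algebra over ℚ and let P : R → R be a ℚ-linear Rota–Baxter operator of weight 1. Fix a ∈ R and define S₀ = 1 and S_{n+1} = P(Sₙ · a) for n ≥ 0 (so Sₙ = P(P(⋯P(a)a⋯)a) is the n-fold iteration). Let L ∈ R[[t]] be the formal power series L = ∑_{i≥1} ((−1)^{i−1}/i) · P(aⁱ) · tⁱ, which has zero constant term. Then the formal exponential of L, namely the substitution of L into the exponential series ∑_{n≥0} Xⁿ/n!, equals the power series ∑_{n≥0} Sₙ tⁿ in R[[t]]. -/

import Mathlib

/-- Baxter's coefficient recursion for the sequence `Sₙ`: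
`∑_{k=0}^{m} (-1)^k P(a^{k+1}) S_{m-k} = (m+1) S_{m+1}`. -/
lemma spitzer_star {R : Type*} [CommRing R] [Algebra ℚ R]
    (P : R →ₗ[ℚ] R)
    (hP : ∀ x y : R, P x * P y = P (x * P y) + P (P x * y) + P (x * y))
    (a : R) (S : ℕ → R) (hS0 : S 0 = 1) (hS : ∀ n : ℕ, S (n + 1) = P (S n * a)) :
    ∀ m : ℕ, ∑ k ∈ Finset.range (m + 1), ((-1 : ℚ) ^ k • P (a ^ (k + 1))) * S (m - k)
      = ((m + 1 : ℕ) : ℚ) • S (m + 1) := by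
  intro m
  induction m with
  | zero => simp [hS, hS0, mul_comm]
  | succ m ih =>
    set f : ℕ → R := fun k => (-1 : ℚ) ^ k • P (a ^ (k + 1) * S (m + 1 - k)) with hf
    have hterm : ∀ k ∈ Finset.range (m + 1),
        ((-1 : ℚ) ^ k • P (a ^ (k + 1))) * S (m + 1 - k)
          = (f k - f (k + 1)) + (-1 : ℚ) ^ k • P ((P (a ^ (k + 1)) * S (m - k)) * a) := by
      intro k hk
      have hk' : k ≤ m := Nat.lt_succ_iff.mp (Finset.mem_range.mp hk)
      have h1 : m + 1 - k = (m - k) + 1 := by omega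
      have h2 : m + 1 - (k + 1) = m - k := by omega
      rw [h1, hS (m - k), smul_mul_assoc, hP]
      have e1 : a ^ (k + 1) * P (S (m - k) * a) = a ^ (k + 1) * S (m + 1 - k) := by
        rw [h1, hS]
      have e2 : P (a ^ (k + 1)) * (S (m - k) * a) = (P (a ^ (k + 1)) * S (m - k)) * a := by
        ring
      have e3 : a ^ (k + 1) * (S (m - k) * a) = a ^ (k + 1 + 1) * S (m + 1 - (k + 1)) := by
        rw [h2]; ring
      have e4 : f (k + 1) = -((-1 : ℚ) ^ k • P (a ^ (k + 1 + 1) * S (m + 1 - (k + 1)))) := by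
        simp [hf, pow_succ]
      rw [e1, e2, e3, e4]
      simp only [hf, map_add, smul_add]
      abel
    rw [Finset.sum_range_succ, Finset.sum_congr rfl hterm, Finset.sum_add_distrib,
      Finset.sum_range_sub' f]
    have hB : ∑ k ∈ Finset.range (m + 1), (-1 : ℚ) ^ k • P ((P (a ^ (k + 1)) * S (m - k)) * a)
        = ((m + 1 : ℕ) : ℚ) • S (m + 2) := by
      have : ∑ k ∈ Finset.range (m + 1), (-1 : ℚ) ^ k • P ((P (a ^ (k + 1)) * S (m - k)) * a)
          = P ((∑ k ∈ Finset.range (m + 1), ((-1 : ℚ) ^ k • P (a ^ (k + 1))) * S (m - k)) * a) := by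
        rw [Finset.sum_mul, map_sum]
        refine Finset.sum_congr rfl fun k _ => ?_
        rw [smul_mul_assoc, smul_mul_assoc, map_smul]
      rw [this, ih, smul_mul_assoc, map_smul, ← hS]
    rw [hB]
    have hf0 : f 0 = S (m + 2) := by
      simp only [hf, pow_zero, one_smul, Nat.sub_zero, zero_add, pow_one]
      rw [mul_comm, ← hS]
    have hfm : f (m + 1) = (-1 : ℚ) ^ (m + 1) • P (a ^ (m + 1 + 1)) := by
      simp only [hf, Nat.sub_self, hS0, mul_one]
    have hms : m + 1 - (m + 1) = 0 := Nat.sub_self _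
    rw [hf0, hfm, hms, hS0, mul_one]
    push_cast
    module

open PowerSeries in
/-- If a power series has zero constant term, then `coeff k (Lⁿ) = 0` for `k < n`. -/
lemma spitzer_coeff_pow_zero {R : Type*} [CommRing R] (L : PowerSeries R)
    (hc : constantCoeff L = 0) {k n : ℕ} (h : k < n) : PowerSeries.coeff k (L ^ n) = 0 := by
  have hd : (X : PowerSeries R) ^ n ∣ L ^ n :=
    pow_dvd_pow_of_dvd (PowerSeries.X_dvd_iff.mpr hc) n
  exact PowerSeries.X_pow_dvd_iff.mp hd k h

/-- The formal exponential `exp(L) = ∑_{n≥0} Lⁿ/n!` of a power series `L` with zero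
constant term, over a commutative `ℚ`-algebra `R`.  Since `L` has zero constant
term, `coeff m (Lⁿ) = 0` for `n > m`, so the coefficient of `tᵐ` in `exp(L)` is
the finite sum `∑_{n=0}^{m} (1/n!)·coeff m (Lⁿ)`, which is how we define it. -/
noncomputable def PowerSeries.expOf {R : Type*} [CommRing R] [Algebra ℚ R]
    (L : PowerSeries R) : PowerSeries R :=
  PowerSeries.mk fun m =>
    ∑ n ∈ Finset.range (m + 1),
      ((n.factorial : ℚ)⁻¹) • (PowerSeries.coeff m (L ^ n))

open PowerSeries in
/-- The differential equation satisfied by `expOf L`, in coefficient form: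
`(m+1)·coeff (m+1) (exp L) = ∑_j coeff j L' · coeff (m-j) (exp L)`. -/
lemma spitzer_expODE {R : Type*} [CommRing R] [Algebra ℚ R] (L : PowerSeries R)
    (hc : constantCoeff L = 0) (m : ℕ) :
    ((m + 1 : ℕ) : ℚ) • PowerSeries.coeff (m + 1) (PowerSeries.expOf L)
      = ∑ j ∈ Finset.range (m + 1),
          PowerSeries.coeff j (d⁄dX R L) * PowerSeries.coeff (m - j) (PowerSeries.expOf L) := by
  have hE : ∀ r : ℕ, coeff r (expOf L)
      = ∑ n ∈ Finset.range (r + 1), ((n.factorial : ℚ)⁻¹) • coeff r (L ^ n) := by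
    intro r; simp [expOf]
  have hE' : ∀ r N : ℕ, r ≤ N → coeff r (expOf L)
      = ∑ n ∈ Finset.range (N + 1), ((n.factorial : ℚ)⁻¹) • coeff r (L ^ n) := by
    intro r N hrN
    rw [hE r]
    refine Finset.sum_subset (by intro x hx; simp at hx ⊢; omega) ?_
    intro n hn hn'
    simp only [Finset.mem_range] at hn hn'
    rw [spitzer_coeff_pow_zero L hc (by omega), smul_zero]
  have hkey : ∀ n : ℕ, (m + 1) • coeff (m + 1) (L ^ (n + 1))
      = (n + 1) • coeff m ((d⁄dX R L) * L ^ n) := by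
    intro n
    have h1 : coeff m (d⁄dX R (L ^ (n + 1))) = coeff (m + 1) (L ^ (n + 1)) * (m + 1) :=
      coeff_derivative _ m
    have h2 : d⁄dX R (L ^ (n + 1)) = (n + 1) • (L ^ n • d⁄dX R L) := by
      simpa using Derivation.leibniz_pow (d⁄dX R) (a := L) (n + 1)
    rw [h2] at h1
    simp only [map_nsmul, smul_eq_mul] at h1
    have hcm : (d⁄dX R L) * L ^ n = L ^ n * d⁄dX R L := mul_comm _ _
    rw [nsmul_eq_mul] at h1
    rw [hcm, nsmul_eq_mul, nsmul_eq_mul]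
    push_cast at h1 ⊢
    linear_combination -h1
  rw [hE (m + 1)]
  rw [Finset.smul_sum]
  rw [Finset.sum_range_succ']
  have h0 : ((m + 1 : ℕ) : ℚ) • (((Nat.factorial 0 : ℚ))⁻¹ • coeff (m + 1) (L ^ 0)) = 0 := by
    simp [PowerSeries.coeff_one]
  rw [h0, add_zero]
  have hstep : ∀ n : ℕ, ((m + 1 : ℕ) : ℚ) • (((Nat.factorial (n + 1) : ℚ))⁻¹ • coeff (m + 1) (L ^ (n + 1)))
      = ((Nat.factorial n : ℚ))⁻¹ • coeff m ((d⁄dX R L) * L ^ n) := by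
    intro n
    have hnn : ((m + 1 : ℕ) : ℚ) • coeff (m + 1) (L ^ (n + 1))
        = ((n + 1 : ℕ) : ℚ) • coeff m ((d⁄dX R L) * L ^ n) := by
      have := hkey n
      rw [← Nat.cast_smul_eq_nsmul ℚ, ← Nat.cast_smul_eq_nsmul ℚ] at this
      exact this
    rw [smul_comm, hnn, smul_comm, ← smul_assoc, smul_eq_mul]
    congr 1
    rw [Nat.factorial_succ]
    have h1 : ((n : ℚ) + 1) ≠ 0 := by positivity
    have h2 : ((n.factorial : ℚ)) ≠ 0 := by
      exact_mod_cast Nat.cast_ne_zero.mpr n.factorial_ne_zero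
    push_cast
    field_simp
  rw [Finset.sum_congr rfl fun n _ => hstep n]
  have hmul : ∀ n : ℕ, coeff m ((d⁄dX R L) * L ^ n)
      = ∑ j ∈ Finset.range (m + 1), coeff j (d⁄dX R L) * coeff (m - j) (L ^ n) := by
    intro n
    rw [coeff_mul, Finset.Nat.sum_antidiagonal_eq_sum_range_succ_mk]
  calc ∑ n ∈ Finset.range (m + 1), ((Nat.factorial n : ℚ))⁻¹ • coeff m ((d⁄dX R L) * L ^ n)
      = ∑ n ∈ Finset.range (m + 1), ∑ j ∈ Finset.range (m + 1),
          coeff j (d⁄dX R L) * (((Nat.factorial n : ℚ))⁻¹ • coeff (m - j) (L ^ n)) := by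
        refine Finset.sum_congr rfl fun n _ => ?_
        rw [hmul n, Finset.smul_sum]
        exact Finset.sum_congr rfl fun j _ => (mul_smul_comm _ _ _).symm
    _ = ∑ j ∈ Finset.range (m + 1), coeff j (d⁄dX R L) *
          (∑ n ∈ Finset.range (m + 1), ((Nat.factorial n : ℚ))⁻¹ • coeff (m - j) (L ^ n)) := by
        rw [Finset.sum_comm]
        exact Finset.sum_congr rfl fun j _ => (Finset.mul_sum _ _ _).symm
    _ = ∑ j ∈ Finset.range (m + 1), coeff j (d⁄dX R L) * coeff (m - j) (expOf L) := by
        refine Finset.sum_congr rfl fun j hj => ?_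
        rw [hE' (m - j) m (by omega)]

open PowerSeries in
/-- **Spitzer's identity.**  Let `P` be a `ℚ`-linear Rota–Baxter operator of
weight 1 on a commutative `ℚ`-algebra `R`, let `a ∈ R`, and let `Sₙ` be the
`n`-fold iteration `S₀ = 1`, `S_{n+1} = P(Sₙ·a)`.  Then with
`L = ∑_{i≥1} ((−1)^{i−1}/i)·P(aⁱ)·tⁱ` one has `exp(L) = ∑_{n≥0} Sₙ tⁿ` in `R[[t]]`. -/
theorem spitzer_identity {R : Type*} [CommRing R] [Algebra ℚ R]
    (P : R →ₗ[ℚ] R)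
    (hP : ∀ x y : R, P x * P y = P (x * P y) + P (P x * y) + P (x * y))
    (a : R) (S : ℕ → R) (hS0 : S 0 = 1) (hS : ∀ n : ℕ, S (n + 1) = P (S n * a))
    (L : PowerSeries R)
    (hL : ∀ i : ℕ, PowerSeries.coeff i L =
      if i = 0 then 0 else (((-1 : ℚ) ^ (i - 1) / (i : ℚ)) • P (a ^ i))) :
    PowerSeries.expOf L = PowerSeries.mk S := by
  have hc : constantCoeff L = 0 := by
    have := hL 0
    simpa using this
  have hdL : ∀ j : ℕ, coeff j (d⁄dX R L) = (-1 : ℚ) ^ j • P (a ^ (j + 1)) := by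
    intro j
    rw [PowerSeries.coeff_derivative, hL (j + 1)]
    simp only [Nat.succ_ne_zero, if_false, Nat.add_sub_cancel]
    have e : P (a ^ (j + 1)) * ((j : R) + 1) = ((j + 1 : ℕ) : ℚ) • P (a ^ (j + 1)) := by
      rw [Nat.cast_smul_eq_nsmul, nsmul_eq_mul, mul_comm]
      push_cast; ring
    rw [smul_mul_assoc, e, smul_smul]
    congr 1
    have h1 : ((j : ℚ) + 1) ≠ 0 := by positivity
    push_cast
    field_simp
  suffices h : ∀ m : ℕ, coeff m (expOf L) = S m by
    exact PowerSeries.ext fun n => by rw [h n, PowerSeries.coeff_mk]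
  intro m
  induction m using Nat.strong_induction_on with
  | _ m ih =>
    match m with
    | 0 =>
      rw [hS0]
      simp [PowerSeries.expOf]
    | Nat.succ m =>
      have h1 := spitzer_expODE L hc m
      have h2 : ∑ j ∈ Finset.range (m + 1), coeff j (d⁄dX R L) * coeff (m - j) (expOf L)
          = ((m + 1 : ℕ) : ℚ) • S (m + 1) := by
        rw [← spitzer_star P hP a S hS0 hS m]
        refine Finset.sum_congr rfl fun j hj => ?_
        simp only [Finset.mem_range] at hj
        rw [hdL j, ih (m - j) (by omega)]
      rw [h2] at h1
      have hne : ((m + 1 : ℕ) : ℚ) ≠ 0 := by positivity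
      calc coeff (m + 1) (expOf L)
          = ((m + 1 : ℕ) : ℚ)⁻¹ • (((m + 1 : ℕ) : ℚ) • coeff (m + 1) (expOf L)) :=
            (inv_smul_smul₀ hne _).symm
        _ = ((m + 1 : ℕ) : ℚ)⁻¹ • (((m + 1 : ℕ) : ℚ) • S (m + 1)) := by rw [h1]
        _ = S (m + 1) := inv_smul_smul₀ hne _
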